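/- If a random adjacency matrix X on n vertices with m edges is obtained via the stub-pairing map from a ball exchangeable random urn configuration Ψ ∈ [n]^{[2m]}, then for every B ∈ A_n^m: P(X = B) = P((d(X,i))_{i=1}^n = (d(B,i))_{i=1}^n) · (∏_{i=1}^n d(B,i)!)/(2m)! · m! · 2^{m'(B)} / ((∏_{i<j} B(i,j)!) · (∏_{i=1}^n (B(i,i)/2)!)), where m'(B) = Σ_{i<j} B(i,j) is the number of non-loop edges. -/

import Mathlib

open Finset Nat

/-- The number of balls of color `i` in the urn configuration `ψ`. -/
def colorCount {M n : ℕ} (ψ : Fin M → Fin n) (i : Fin n) : ℕ :=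
  (Finset.univ.filter fun l => ψ l = i).card

/-- The adjacency matrix obtained from the urn configuration `ψ : [2m] → [n]` by the
stub-pairing map. -/
def stubAdj {m n : ℕ} (ψ : Fin (2 * m) → Fin n) (i j : Fin n) : ℕ :=
  ∑ e : Fin m,
    ((if ψ ⟨2 * (e : ℕ), by have := e.isLt; omega⟩ = i ∧
         ψ ⟨2 * (e : ℕ) + 1, by have := e.isLt; omega⟩ = j then 1 else 0) +
     (if ψ ⟨2 * (e : ℕ), by have := e.isLt; omega⟩ = j ∧
         ψ ⟨2 * (e : ℕ) + 1, by have := e.isLt; omega⟩ = i then 1 else 0))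

/-- The degree `d(B,i) = ∑_j B(i,j)`. -/
def degB {n : ℕ} (B : Fin n → Fin n → ℕ) (i : Fin n) : ℕ := ∑ j, B i j

/-- The number `m'(B) = ∑_{i<j} B(i,j)` of non-loop edges. -/
def nonloop {n : ℕ} (B : Fin n → Fin n → ℕ) : ℕ :=
  ∑ i : Fin n, ∑ j : Fin n, if i < j then B i j else 0


/-- the `e`-th edge (ordered pair) of a configuration -/
def epr {m n : ℕ} (ψ : Fin (2 * m) → Fin n) (e : Fin m) : Fin n × Fin n :=
  (ψ ⟨2 * (e : ℕ), by have := e.isLt; omega⟩,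
   ψ ⟨2 * (e : ℕ) + 1, by have := e.isLt; omega⟩)

/-- normalized edge count prescribed by `B` -/
def ecnt {n : ℕ} (B : Fin n → Fin n → ℕ) (q : Fin n × Fin n) : ℕ :=
  if q.1 < q.2 then B q.1 q.2 else if q.1 = q.2 then B q.1 q.1 / 2 else 0

/-- normalize an ordered pair -/
def pnorm {n : ℕ} (q : Fin n × Fin n) : Fin n × Fin n := if q.2 < q.1 then q.swap else q

/-- positions equiv -/
def e2m (m : ℕ) : Fin m × Bool ≃ Fin (2 * m) where
  toFun x := ⟨2 * (x.1 : ℕ) + (if x.2 then 1 else 0), by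
    have := x.1.isLt; split <;> omega⟩
  invFun l := (⟨(l : ℕ) / 2, by have := l.isLt; omega⟩, decide ((l : ℕ) % 2 = 1))
  left_inv := by
    rintro ⟨⟨e, he⟩, b⟩
    cases b <;> simp <;> omega
  right_inv := by
    rintro ⟨l, hl⟩
    apply Fin.ext
    by_cases h : l % 2 = 1 <;> simp [h] <;> omega

def bswap {n : ℕ} (b : Bool) (q : Fin n × Fin n) : Fin n × Fin n := if b then q.swap else q

def gact {m n : ℕ} (σ : Equiv.Perm (Fin m)) (ε : Fin m → Bool)
    (ψ : Fin (2 * m) → Fin n) : Fin (2 * m) → Fin n := fun l =>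
  if (l : ℕ) % 2 = 0 then
    (bswap (ε ⟨(l : ℕ) / 2, by have := l.isLt; omega⟩)
      (epr ψ (σ ⟨(l : ℕ) / 2, by have := l.isLt; omega⟩))).1
  else
    (bswap (ε ⟨(l : ℕ) / 2, by have := l.isLt; omega⟩)
      (epr ψ (σ ⟨(l : ℕ) / 2, by have := l.isLt; omega⟩))).2

def realize {m n : ℕ} (B : Fin n → Fin n → ℕ)
    (E : Fin m ≃ (q : Fin n × Fin n) × Fin (ecnt B q)) : Fin (2 * m) → Fin n :=
  fun l =>
    if (l : ℕ) % 2 = 0 then (E ⟨(l : ℕ) / 2, by have := l.isLt; omega⟩).1.1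
    else (E ⟨(l : ℕ) / 2, by have := l.isLt; omega⟩).1.2
lemma card_perm_comp {α β : Type*} [Fintype α] [DecidableEq α] [Fintype β] [DecidableEq β]
    (f g : α → β)
    (h : ∀ b, (univ.filter fun x => g x = b).card = (univ.filter fun x => f x = b).card) :
    (univ.filter fun σ : Equiv.Perm α => ∀ x, f (σ x) = g x).card
      = ∏ b, ((univ.filter fun x => f x = b).card)! := by
  classical
  have key : Fintype.card {σ : Equiv.Perm α // ∀ x, f (σ x) = g x}
      = Fintype.card (∀ b, {x // g x = b} ≃ {x // f x = b}) := by
    apply Fintype.card_of_bijective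
      (f := fun (σ : {σ : Equiv.Perm α // ∀ x, f (σ x) = g x}) b =>
        (σ : Equiv.Perm α).subtypeEquiv
          (p := fun x => g x = b) (q := fun x => f x = b) (fun x => by simp only [σ.2 x]))
    constructor
    · intro σ σ' hh
      ext x
      have h1 := congrArg (fun E => ((E ⟨x, rfl⟩ : {y // f y = g x})).1) (congrFun hh (g x))
      simpa using h1
    · intro F
      have aux : ∀ (x : α) (b : β) (hx : g x = b),
          (F b ⟨x, hx⟩).1 = (F (g x) ⟨x, rfl⟩).1 := by
        intro x b hx; subst hx; rfl
      set s : α → α := fun x => (F (g x) ⟨x, rfl⟩).1 with hs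
      have hprop : ∀ x, f (s x) = g x := fun x => (F (g x) ⟨x, rfl⟩).2
      have hinj : Function.Injective s := by
        intro x₁ x₂ hx
        have hg : g x₁ = g x₂ := by rw [← hprop x₁, ← hprop x₂, hx]
        have h2 := aux x₂ (g x₁) hg.symm
        have h3 : (F (g x₁)) ⟨x₁, rfl⟩ = (F (g x₁)) ⟨x₂, hg.symm⟩ := by
          apply Subtype.ext
          rw [h2]; exact hx
        have := (F (g x₁)).injective h3
        exact congrArg Subtype.val this
      have hbij : Function.Bijective s := Finite.injective_iff_bijective.mp hinj
      refine ⟨⟨Equiv.ofBijective s hbij, hprop⟩, ?_⟩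
      funext b
      apply Equiv.ext
      rintro ⟨x, hx⟩
      subst hx
      apply Subtype.ext
      rfl
  have c1 : (univ.filter fun σ : Equiv.Perm α => ∀ x, f (σ x) = g x).card
      = Fintype.card {σ : Equiv.Perm α // ∀ x, f (σ x) = g x} :=
    (Fintype.card_subtype _).symm
  rw [c1, key, Fintype.card_pi]
  refine Finset.prod_congr rfl fun b _ => ?_
  have e : {x // g x = b} ≃ {x // f x = b} :=
    Fintype.equivOfCardEq (by rw [Fintype.card_subtype, Fintype.card_subtype]; exact h b)
  rw [Fintype.card_equiv e, Fintype.card_subtype]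
  congr 1
  exact h b

lemma stubAdj_eq {m n : ℕ} (ψ : Fin (2 * m) → Fin n) (i j : Fin n) :
    stubAdj ψ i j = ∑ e : Fin m,
      ((if epr ψ e = (i, j) then 1 else 0) + (if epr ψ e = (j, i) then 1 else 0)) := by
  simp [stubAdj, epr, Prod.ext_iff]

/-- positions equiv -/
lemma colorCount_eq {m n : ℕ} (ψ : Fin (2 * m) → Fin n) (i : Fin n) :
    colorCount ψ i = ∑ e : Fin m,
      ((if (epr ψ e).1 = i then 1 else 0) + (if (epr ψ e).2 = i then 1 else 0)) := by
  rw [colorCount, Finset.card_filter]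
  rw [← Equiv.sum_comp (e2m m) (fun l => if ψ l = i then 1 else 0)]
  rw [Fintype.sum_prod_type]
  refine Finset.sum_congr rfl fun e _ => ?_
  rw [Fintype.sum_bool]
  simp only [e2m, epr, Equiv.coe_fn_mk, if_true, if_false, Nat.add_zero]
  exact Nat.add_comm _ _

lemma sum_ite_fst {n : ℕ} (p : Fin n × Fin n) (i : Fin n) :
    ∑ j, (if p = (i, j) then 1 else 0 : ℕ) = if p.1 = i then 1 else 0 := by
  obtain ⟨a, c⟩ := p
  simp only [Prod.mk.injEq]
  by_cases h : a = i <;> simp [h]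

lemma sum_ite_snd {n : ℕ} (p : Fin n × Fin n) (i : Fin n) :
    ∑ j, (if p = (j, i) then 1 else 0 : ℕ) = if p.2 = i then 1 else 0 := by
  obtain ⟨a, c⟩ := p
  simp only [Prod.mk.injEq]
  by_cases h : c = i <;> simp [h, and_comm]

lemma colorCount_of_stub {m n : ℕ} {B : Fin n → Fin n → ℕ} {ψ : Fin (2 * m) → Fin n}
    (h : ∀ i j, stubAdj ψ i j = B i j) (i : Fin n) :
    colorCount ψ i = degB B i := by
  unfold degB
  rw [colorCount_eq]
  calc ∑ e : Fin m, ((if (epr ψ e).1 = i then 1 else 0) + (if (epr ψ e).2 = i then 1 else 0))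
      = ∑ e : Fin m, ((∑ j, if epr ψ e = (i, j) then 1 else 0)
          + (∑ j, if epr ψ e = (j, i) then 1 else 0)) := by
        refine Finset.sum_congr rfl fun e _ => ?_
        rw [sum_ite_fst, sum_ite_snd]
    _ = ∑ j, ∑ e : Fin m, ((if epr ψ e = (i, j) then 1 else 0)
          + (if epr ψ e = (j, i) then 1 else 0)) := by
        rw [Finset.sum_comm]
        refine Finset.sum_congr rfl fun e _ => ?_
        rw [Finset.sum_add_distrib]
    _ = ∑ j, B i j := by
        refine Finset.sum_congr rfl fun j _ => ?_
        rw [← stubAdj_eq, h]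

lemma colorCount_comp {m n : ℕ} (ψ : Fin (2 * m) → Fin n) (τ : Equiv.Perm (Fin (2 * m))) (i : Fin n) :
    colorCount (ψ ∘ τ) i = colorCount ψ i := by
  simp only [colorCount, Finset.card_filter, Function.comp]
  exact Equiv.sum_comp τ (fun l => if ψ l = i then 1 else 0)
lemma pnorm_eq {n : ℕ} (p : Fin n × Fin n) (i j : Fin n) (hij : i ≤ j) :
    pnorm p = (i, j) ↔ (p = (i, j) ∨ p = (j, i)) := by
  obtain ⟨a, c⟩ := p
  have hij' : (i : ℕ) ≤ (j : ℕ) := hij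
  unfold pnorm
  split <;> rename_i h
  · dsimp only at h
    rw [Fin.lt_def] at h
    simp only [Prod.swap_prod_mk, Prod.mk.injEq, Fin.ext_iff]
    omega
  · dsimp only at h
    rw [not_lt, Fin.le_def] at h
    simp only [Prod.mk.injEq, Fin.ext_iff]
    omega

lemma pnorm_fst_le {n : ℕ} (q : Fin n × Fin n) : ((pnorm q).1 : ℕ) ≤ ((pnorm q).2 : ℕ) := by
  obtain ⟨a, c⟩ := q
  unfold pnorm
  split <;> rename_i h
  · dsimp only at h; rw [Fin.lt_def] at h; simp [pnorm]; omega
  · dsimp only at h; rw [not_lt, Fin.le_def] at h; simpa using h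

lemma fiber_ecnt {m n : ℕ} {B : Fin n → Fin n → ℕ} {ψ : Fin (2 * m) → Fin n}
    (hstub : ∀ i j, stubAdj ψ i j = B i j) (q : Fin n × Fin n) :
    (univ.filter fun e => pnorm (epr ψ e) = q).card = ecnt B q := by
  obtain ⟨i, j⟩ := q
  rw [Finset.card_filter]
  rcases lt_trichotomy i j with h | h | h
  · have step : ∀ e : Fin m, (if pnorm (epr ψ e) = (i, j) then (1:ℕ) else 0)
        = ((if epr ψ e = (i, j) then 1 else 0) + (if epr ψ e = (j, i) then 1 else 0)) := by
      intro e
      simp only [pnorm_eq _ _ _ h.le]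
      have hexcl : ¬(epr ψ e = (i, j) ∧ epr ψ e = (j, i)) := by
        rintro ⟨h1, h2⟩
        rw [h1] at h2
        exact absurd (congrArg Prod.fst h2) h.ne
      by_cases h1 : epr ψ e = (i, j)
      · have h2 : ¬ epr ψ e = (j, i) := fun h2 => hexcl ⟨h1, h2⟩
        rw [if_pos (Or.inl h1), if_pos h1, if_neg h2]
      · by_cases h2 : epr ψ e = (j, i)
        · rw [if_pos (Or.inr h2), if_neg h1, if_pos h2]
        · rw [if_neg (by tauto), if_neg h1, if_neg h2]
    rw [Finset.sum_congr rfl fun e _ => step e, ← stubAdj_eq, hstub]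
    simp [ecnt, h]
  · subst h
    have step : ∀ e : Fin m, (if pnorm (epr ψ e) = (i, i) then (1:ℕ) else 0)
        = (if epr ψ e = (i, i) then 1 else 0) := by
      intro e
      simp only [pnorm_eq _ _ _ le_rfl, or_self]
    rw [Finset.sum_congr rfl fun e _ => step e]
    have h2 : B i i = 2 * ∑ e : Fin m, (if epr ψ e = (i, i) then (1:ℕ) else 0) := by
      rw [← hstub i i, stubAdj_eq]
      rw [Finset.mul_sum]
      exact Finset.sum_congr rfl fun e _ => by ring
    have : ecnt B (i, i) = B i i / 2 := by simp [ecnt]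
    rw [this]
    omega
  · have step : ∀ e : Fin m, (if pnorm (epr ψ e) = (i, j) then (1:ℕ) else 0) = 0 := by
      intro e
      rw [if_neg]
      intro hc
      have := pnorm_fst_le (epr ψ e)
      rw [hc] at this
      rw [Fin.lt_def] at h
      simp at this
      omega
    rw [Finset.sum_eq_zero fun e _ => step e]
    have : ecnt B (i, j) = 0 := by simp [ecnt, lt_asymm h, h.ne']
    rw [this]
lemma sum_split {n : ℕ} {B : Fin n → Fin n → ℕ} (hsym : ∀ i j, B i j = B j i) :
    ∑ i, ∑ j, B i j = 2 * nonloop B + ∑ i, B i i := by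
  have pt : ∀ i j : Fin n, B i j = (if i < j then B i j else 0) +
      ((if j < i then B i j else 0) + (if i = j then B i j else 0)) := by
    intro i j
    rcases lt_trichotomy i j with h | h | h
    · simp [h, lt_asymm h, h.ne]
    · subst h; simp [lt_irrefl]
    · simp [lt_asymm h, h, h.ne']
  calc ∑ i, ∑ j, B i j
      = ∑ i, ∑ j, ((if i < j then B i j else 0) +
        ((if j < i then B i j else 0) + (if i = j then B i j else 0))) := by
        exact Finset.sum_congr rfl fun i _ => Finset.sum_congr rfl fun j _ => pt i j
    _ = nonloop B + ((∑ i, ∑ j, if j < i then B i j else 0) + ∑ i, ∑ j, if i = j then B i j else 0) := by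
        rw [nonloop]
        rw [← Finset.sum_add_distrib, ← Finset.sum_add_distrib]
        exact Finset.sum_congr rfl fun i _ => by rw [Finset.sum_add_distrib, Finset.sum_add_distrib]
    _ = 2 * nonloop B + ∑ i, B i i := by
        have h2 : (∑ i, ∑ j, if j < i then B i j else 0) = nonloop B := by
          rw [Finset.sum_comm, nonloop]
          refine Finset.sum_congr rfl fun i _ => Finset.sum_congr rfl fun j _ => ?_
          rw [hsym]
        have h3 : (∑ i : Fin n, ∑ j, if i = j then B i j else 0) = ∑ i, B i i := by
          refine Finset.sum_congr rfl fun i _ => ?_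
          simp [Finset.sum_ite_eq]
        rw [h2, h3]; ring

lemma diag_sum {n : ℕ} {B : Fin n → Fin n → ℕ} (heven : ∀ i, 2 ∣ B i i) : ∑ i, B i i = 2 * ∑ i, B i i / 2 := by
  rw [Finset.mul_sum]
  exact Finset.sum_congr rfl fun i _ => (Nat.mul_div_cancel' (heven i)).symm

lemma m_split {m n : ℕ} {B : Fin n → Fin n → ℕ} (hsym : ∀ i j, B i j = B j i) (heven : ∀ i, 2 ∣ B i i)
    (hm : ∑ i, ∑ j, B i j = 2 * m) : m = nonloop B + ∑ i, B i i / 2 := by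
  have h1 := sum_split (B := B) hsym
  have h2 := diag_sum (B := B) heven
  omega

lemma sum_ecnt {m n : ℕ} {B : Fin n → Fin n → ℕ} (hsym : ∀ i j, B i j = B j i) (heven : ∀ i, 2 ∣ B i i)
    (hm : ∑ i, ∑ j, B i j = 2 * m) : ∑ q : Fin n × Fin n, ecnt B q = m := by
  rw [Fintype.sum_prod_type]
  have pt : ∀ i j : Fin n, ecnt B (i, j) =
      (if i < j then B i j else 0) + (if i = j then B i i / 2 else 0) := by
    intro i j
    rcases lt_trichotomy i j with h | h | h
    · simp [ecnt, h, h.ne]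
    · subst h; simp [ecnt, lt_irrefl]
    · simp [ecnt, lt_asymm h, h.ne']
  calc ∑ i, ∑ j, ecnt B (i, j)
      = ∑ i, ∑ j, ((if i < j then B i j else 0) + (if i = j then B i i / 2 else 0)) :=
        Finset.sum_congr rfl fun i _ => Finset.sum_congr rfl fun j _ => pt i j
    _ = nonloop B + ∑ i, B i i / 2 := by
        have expand : ∀ i : Fin n, ∑ j, ((if i < j then B i j else 0) + (if i = j then B i i / 2 else 0))
            = (∑ j, if i < j then B i j else 0) + B i i / 2 := by
          intro i
          rw [Finset.sum_add_distrib]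
          congr 1
          simp [Finset.sum_ite_eq]
        rw [Finset.sum_congr rfl fun i _ => expand i, Finset.sum_add_distrib, nonloop]
    _ = m := (m_split hsym heven hm).symm
lemma epr_realize {m n : ℕ} {B : Fin n → Fin n → ℕ} (E : Fin m ≃ (q : Fin n × Fin n) × Fin (ecnt B q)) (e : Fin m) :
    epr (realize B E) e = (E e).1 := by
  have p1 : realize B E ⟨2 * (e : ℕ), by have := e.isLt; omega⟩ = (E e).1.1 := by
    show (if (2 * (e : ℕ)) % 2 = 0 then _ else _) = _
    rw [if_pos (by omega)]
    simp only [show 2 * (e : ℕ) / 2 = (e : ℕ) from by omega, Fin.eta]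
  have p2 : realize B E ⟨2 * (e : ℕ) + 1, by have := e.isLt; omega⟩ = (E e).1.2 := by
    show (if (2 * (e : ℕ) + 1) % 2 = 0 then _ else _) = _
    rw [if_neg (by omega)]
    simp only [show (2 * (e : ℕ) + 1) / 2 = (e : ℕ) from by omega, Fin.eta]
  rw [epr, p1, p2]

lemma cnt_realize {m n : ℕ} {B : Fin n → Fin n → ℕ} (E : Fin m ≃ (q : Fin n × Fin n) × Fin (ecnt B q)) (q : Fin n × Fin n) :
    ∑ e : Fin m, (if (E e).1 = q then (1 : ℕ) else 0) = ecnt B q := by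
  rw [Equiv.sum_comp E (fun x : ((q' : Fin n × Fin n) × Fin (ecnt B q')) =>
    if x.1 = q then (1 : ℕ) else 0)]
  rw [← Finset.univ_sigma_univ, Finset.sum_sigma]
  have inner : ∀ x : Fin n × Fin n, (∑ _k : Fin (ecnt B x), if x = q then (1:ℕ) else 0)
      = if x = q then ecnt B x else 0 := by
    intro x
    rw [Finset.sum_const, Finset.card_univ, Fintype.card_fin, smul_eq_mul]
    by_cases h : x = q <;> simp [h]
  rw [Finset.sum_congr rfl fun x _ => inner x, Finset.sum_ite_eq' univ q (fun x => ecnt B x)]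
  simp

lemma stub_realize {m n : ℕ} {B : Fin n → Fin n → ℕ} (hsym : ∀ i j, B i j = B j i) (heven : ∀ i, 2 ∣ B i i)
    (E : Fin m ≃ (q : Fin n × Fin n) × Fin (ecnt B q)) (i j : Fin n) :
    stubAdj (realize B E) i j = B i j := by
  rw [stubAdj_eq, Finset.sum_add_distrib]
  simp only [epr_realize]
  rw [cnt_realize, cnt_realize]
  rcases lt_trichotomy i j with h | h | h
  · have e1 : ecnt B (i, j) = B i j := by simp [ecnt, h]
    have e2 : ecnt B (j, i) = 0 := by simp [ecnt, lt_asymm h, h.ne']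
    rw [e1, e2, Nat.add_zero]
  · subst h
    have e1 : ecnt B (i, i) = B i i / 2 := by simp [ecnt]
    rw [e1]
    have := heven i
    omega
  · have e1 : ecnt B (i, j) = 0 := by simp [ecnt, lt_asymm h, h.ne']
    have e2 : ecnt B (j, i) = B j i := by simp [ecnt, h]
    rw [e1, e2, hsym, Nat.zero_add]

lemma exists_realization {m n : ℕ} {B : Fin n → Fin n → ℕ} (hsym : ∀ i j, B i j = B j i) (heven : ∀ i, 2 ∣ B i i)
    (hm : ∑ i, ∑ j, B i j = 2 * m) :
    ∃ ψ : Fin (2 * m) → Fin n, ∀ i j, stubAdj ψ i j = B i j := by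
  have hcard : Fintype.card (Fin m) = Fintype.card ((q : Fin n × Fin n) × Fin (ecnt B q)) := by
    simp [Fintype.card_sigma, sum_ecnt hsym heven hm]
  exact ⟨realize B (Fintype.equivOfCardEq hcard),
    stub_realize hsym heven (Fintype.equivOfCardEq hcard)⟩
lemma pnorm_swap {n : ℕ} (p : Fin n × Fin n) : pnorm p.swap = pnorm p := by
  obtain ⟨a, c⟩ := p
  show pnorm (c, a) = pnorm (a, c)
  unfold pnorm
  rcases lt_trichotomy a c with h | h | h
  · rw [if_pos (by simpa using h), if_neg (by simpa using lt_asymm h), Prod.swap_prod_mk]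
  · subst h; simp
  · rw [if_neg (by simpa using lt_asymm h), if_pos (by simpa using h), Prod.swap_prod_mk]

lemma pnorm_self {n : ℕ} (p : Fin n × Fin n) :
    pnorm p = p ∨ pnorm p = p.swap := by
  obtain ⟨a, c⟩ := p
  unfold pnorm
  split
  · right; rfl
  · left; rfl

lemma pnorm_eq_pnorm {n : ℕ} (q p : Fin n × Fin n) :
    pnorm q = pnorm p ↔ (q = p ∨ q = p.swap) := by
  constructor
  · intro h
    have hle : (pnorm p).1 ≤ (pnorm p).2 := by
      rw [Fin.le_def]; exact pnorm_fst_le p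
    obtain ⟨i, j, hij, hp⟩ : ∃ i j, i ≤ j ∧ pnorm p = (i, j) := ⟨_, _, hle, rfl⟩
    have h1 := (pnorm_eq p i j hij).mp hp
    have h2 := (pnorm_eq q i j hij).mp (h.trans hp)
    rcases h1 with rfl | rfl <;> rcases h2 with rfl | rfl <;> simp
  · rintro (rfl | rfl)
    · rfl
    · exact pnorm_swap p

/-! ### the group action -/

lemma epr_gact {m n : ℕ} (σ : Equiv.Perm (Fin m)) (ε : Fin m → Bool)
    (ψ : Fin (2 * m) → Fin n) (e : Fin m) :
    epr (gact σ ε ψ) e = bswap (ε e) (epr ψ (σ e)) := by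
  have p1 : gact σ ε ψ ⟨2 * (e : ℕ), by have := e.isLt; omega⟩ = (bswap (ε e) (epr ψ (σ e))).1 := by
    show (if (2 * (e : ℕ)) % 2 = 0 then _ else _) = _
    rw [if_pos (by omega)]
    simp only [show 2 * (e : ℕ) / 2 = (e : ℕ) from by omega, Fin.eta]
  have p2 : gact σ ε ψ ⟨2 * (e : ℕ) + 1, by have := e.isLt; omega⟩
      = (bswap (ε e) (epr ψ (σ e))).2 := by
    show (if (2 * (e : ℕ) + 1) % 2 = 0 then _ else _) = _
    rw [if_neg (by omega)]
    simp only [show (2 * (e : ℕ) + 1) / 2 = (e : ℕ) from by omega, Fin.eta]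
  rw [epr, p1, p2]

lemma gact_eq_iff {m n : ℕ} (σ : Equiv.Perm (Fin m)) (ε : Fin m → Bool)
    (ψ ψ' : Fin (2 * m) → Fin n) :
    gact σ ε ψ = ψ' ↔ ∀ e, bswap (ε e) (epr ψ (σ e)) = epr ψ' e := by
  constructor
  · intro h e
    rw [← epr_gact σ ε ψ e, h]
  · intro h
    funext l
    have hl := l.isLt
    have he := h ⟨(l : ℕ) / 2, by omega⟩
    by_cases hp : (l : ℕ) % 2 = 0
    · show (if (l : ℕ) % 2 = 0 then _ else _) = _
      rw [if_pos hp, he]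
      show ψ' ⟨2 * ((l : ℕ) / 2), by omega⟩ = ψ' l
      congr 1
      exact Fin.ext (by simp; omega)
    · show (if (l : ℕ) % 2 = 0 then _ else _) = _
      rw [if_neg hp, he]
      show ψ' ⟨2 * ((l : ℕ) / 2) + 1, by omega⟩ = ψ' l
      congr 1
      exact Fin.ext (by simp; omega)

lemma stubAdj_gact {m n : ℕ} (σ : Equiv.Perm (Fin m)) (ε : Fin m → Bool)
    (ψ : Fin (2 * m) → Fin n) (i j : Fin n) :
    stubAdj (gact σ ε ψ) i j = stubAdj ψ i j := by
  rw [stubAdj_eq, stubAdj_eq]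
  simp only [epr_gact]
  have hsw : ∀ (b : Bool) (p : Fin n × Fin n),
      ((if bswap b p = (i, j) then (1:ℕ) else 0) + (if bswap b p = (j, i) then 1 else 0))
      = ((if p = (i, j) then 1 else 0) + (if p = (j, i) then 1 else 0)) := by
    intro b p
    obtain ⟨a, c⟩ := p
    cases b
    · rfl
    · show ((if (c, a) = (i, j) then (1:ℕ) else 0) + if (c, a) = (j, i) then 1 else 0) = _
      simp only [Prod.mk.injEq]
      simp only [Prod.mk.injEq, Fin.ext_iff]
      split_ifs <;> omega
  rw [Finset.sum_congr rfl fun e _ => hsw (ε e) (epr ψ (σ e))]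
  exact Equiv.sum_comp σ (fun e => (if epr ψ e = (i, j) then 1 else 0)
    + (if epr ψ e = (j, i) then 1 else 0))

/-! ### counting the fibers of the action -/

lemma swap_eq_self_iff {n : ℕ} (p : Fin n × Fin n) : p.swap = p ↔ p.1 = p.2 := by
  obtain ⟨a, c⟩ := p
  show (c, a) = (a, c) ↔ a = c
  simp only [Prod.mk.injEq]
  constructor
  · rintro ⟨h, -⟩; exact h.symm
  · intro h; exact ⟨h.symm, h⟩

lemma bool_count {n : ℕ} (q p : Fin n × Fin n) :
    Fintype.card {b : Bool // bswap b q = p}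
      = if pnorm q = pnorm p then (if p.1 = p.2 then 2 else 1) else 0 := by
  have hcard : Fintype.card {b : Bool // bswap b q = p}
      = (if q = p then (1:ℕ) else 0) + (if q.swap = p then 1 else 0) := by
    rw [Fintype.card_subtype, Finset.card_filter, Fintype.sum_bool]
    show ((if q.swap = p then (1:ℕ) else 0) + if q = p then 1 else 0) = _
    exact add_comm _ _
  rw [hcard]
  by_cases h : pnorm q = pnorm p
  · rw [if_pos h]
    rcases (pnorm_eq_pnorm q p).mp h with hq | hq
    · rw [hq, if_pos rfl]
      by_cases hd : p.1 = p.2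
      · rw [if_pos hd, if_pos (by rw [(swap_eq_self_iff p).mpr hd])]
      · rw [if_neg hd, if_neg (fun hc => hd ((swap_eq_self_iff p).mp hc))]
    · rw [hq, Prod.swap_swap, if_pos rfl]
      by_cases hd : p.1 = p.2
      · rw [if_pos hd, if_pos ((swap_eq_self_iff p).mpr hd)]
      · rw [if_neg hd, if_neg (fun hc => hd ((swap_eq_self_iff p).mp hc)), Nat.zero_add]
  · rw [if_neg h, if_neg (fun hc => h (by rw [hc])),
      if_neg (fun hc => h (by rw [← hc, pnorm_swap]))]

lemma loop_card {m n : ℕ} {B : Fin n → Fin n → ℕ} {ψ' : Fin (2 * m) → Fin n}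
    (h' : ∀ i j, stubAdj ψ' i j = B i j) :
    (univ.filter fun e : Fin m => (epr ψ' e).1 = (epr ψ' e).2).card = ∑ i, B i i / 2 := by
  rw [Finset.card_filter]
  have pt : ∀ p : Fin n × Fin n, (if p.1 = p.2 then (1:ℕ) else 0)
      = ∑ i, if pnorm p = (i, i) then 1 else 0 := by
    intro p
    obtain ⟨a, c⟩ := p
    by_cases hd : a = c
    · subst hd
      rw [if_pos rfl]
      have step : ∀ i : Fin n, (if pnorm (a, a) = (i, i) then (1:ℕ) else 0)
          = if a = i then 1 else 0 := by
        intro i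
        simp only [pnorm_eq (a, a) i i le_rfl, or_self, Prod.mk.injEq, and_self]
      rw [Finset.sum_congr rfl fun i _ => step i]
      simp
    · rw [if_neg hd]
      rw [Finset.sum_eq_zero]
      intro i _
      rw [if_neg]
      intro hc
      rcases (pnorm_eq (a, c) i i le_rfl).mp hc with h1 | h1 <;>
        · rw [Prod.mk.injEq] at h1
          exact hd (h1.1.trans h1.2.symm)
  rw [Finset.sum_congr rfl fun e _ => pt (epr ψ' e), Finset.sum_comm]
  refine Finset.sum_congr rfl fun i _ => ?_
  rw [← Finset.card_filter, fiber_ecnt h']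
  simp [ecnt]

lemma gact_fiber {m n : ℕ} {B : Fin n → Fin n → ℕ} {ψ₀ ψ' : Fin (2 * m) → Fin n}
    (h₀ : ∀ i j, stubAdj ψ₀ i j = B i j) (h' : ∀ i j, stubAdj ψ' i j = B i j) :
    (univ.filter fun g : Equiv.Perm (Fin m) × (Fin m → Bool) => gact g.1 g.2 ψ₀ = ψ').card
      = (∏ q : Fin n × Fin n, (ecnt B q)!) * 2 ^ (∑ i, B i i / 2) := by
  classical
  have c1 : (univ.filter fun g : Equiv.Perm (Fin m) × (Fin m → Bool) =>
        gact g.1 g.2 ψ₀ = ψ').card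
      = Fintype.card {g : Equiv.Perm (Fin m) × (Fin m → Bool) //
          ∀ e, bswap (g.2 e) (epr ψ₀ (g.1 e)) = epr ψ' e} := by
    rw [Fintype.card_subtype]
    congr 1
    apply Finset.filter_congr
    intro g _
    simpa using gact_eq_iff g.1 g.2 ψ₀ ψ'
  rw [c1, Fintype.card_congr (Equiv.subtypeProdEquivSigmaSubtype
    (fun (σ : Equiv.Perm (Fin m)) (ε : Fin m → Bool) =>
      ∀ e, bswap (ε e) (epr ψ₀ (σ e)) = epr ψ' e)), Fintype.card_sigma]
  have c2 : ∀ σ : Equiv.Perm (Fin m),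
      Fintype.card {ε : Fin m → Bool // ∀ e, bswap (ε e) (epr ψ₀ (σ e)) = epr ψ' e}
      = if (∀ e, pnorm (epr ψ₀ (σ e)) = pnorm (epr ψ' e))
          then 2 ^ (∑ i, B i i / 2) else 0 := by
    intro σ
    rw [Fintype.card_congr (Equiv.subtypePiEquivPi
      (p := fun e b => bswap b (epr ψ₀ (σ e)) = epr ψ' e)), Fintype.card_pi]
    have step : ∀ e : Fin m, Fintype.card {b : Bool // bswap b (epr ψ₀ (σ e)) = epr ψ' e}
        = if pnorm (epr ψ₀ (σ e)) = pnorm (epr ψ' e)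
            then (if (epr ψ' e).1 = (epr ψ' e).2 then 2 else 1) else 0 :=
      fun e => bool_count _ _
    rw [Finset.prod_congr rfl fun e _ => step e]
    by_cases hσ : ∀ e, pnorm (epr ψ₀ (σ e)) = pnorm (epr ψ' e)
    · rw [if_pos hσ, Finset.prod_congr rfl fun e _ => if_pos (hσ e)]
      rw [Finset.prod_ite (f := fun _ => (2:ℕ)) (g := fun _ => 1), Finset.prod_const,
        Finset.prod_const_one, mul_one, loop_card h']
    · rw [if_neg hσ]
      push_neg at hσ
      obtain ⟨e, he⟩ := hσ
      exact Finset.prod_eq_zero (Finset.mem_univ e) (if_neg he)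
  rw [Finset.sum_congr rfl fun σ _ => c2 σ, Finset.sum_ite, Finset.sum_const,
    Finset.sum_const_zero, add_zero, smul_eq_mul]
  congr 1
  have h1 := (card_perm_comp (fun e => pnorm (epr ψ₀ e)) (fun e => pnorm (epr ψ' e))
      (fun q => by rw [fiber_ecnt h' q, fiber_ecnt h₀ q])).trans
    (Finset.prod_congr rfl fun q _ => by rw [fiber_ecnt h₀ q])
  convert h1 using 2
  ext σ
  simp only [Finset.mem_filter, Finset.mem_univ, true_and]

lemma S1_card {m n : ℕ} {B : Fin n → Fin n → ℕ} (hsym : ∀ i j, B i j = B j i)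
    (heven : ∀ i, 2 ∣ B i i) (hm : ∑ i, ∑ j, B i j = 2 * m) :
    (univ.filter fun ψ : Fin (2 * m) → Fin n => ∀ i j, stubAdj ψ i j = B i j).card
      * ((∏ q : Fin n × Fin n, (ecnt B q)!) * 2 ^ (∑ i, B i i / 2)) = m ! * 2 ^ m := by
  classical
  obtain ⟨ψ₀, h₀⟩ := exists_realization hsym heven hm
  have maps : ∀ g : Equiv.Perm (Fin m) × (Fin m → Bool), g ∈ (univ : Finset _) →
      gact g.1 g.2 ψ₀ ∈ univ.filter fun ψ => ∀ i j, stubAdj ψ i j = B i j := by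
    intro g _
    rw [Finset.mem_filter]
    exact ⟨Finset.mem_univ _, fun i j => by rw [stubAdj_gact]; exact h₀ i j⟩
  have key := Finset.card_eq_sum_card_fiberwise maps
  rw [Finset.sum_congr rfl (fun ψ' hψ' => gact_fiber h₀ (Finset.mem_filter.mp hψ').2),
    Finset.sum_const, smul_eq_mul] at key
  have hcard : (univ : Finset (Equiv.Perm (Fin m) × (Fin m → Bool))).card = m ! * 2 ^ m := by
    simp [Finset.card_univ, Fintype.card_perm]
  rw [← hcard, key]

/-- If a random adjacency matrix `X` on `n` vertices with `m` edges is
obtained via the stub-pairing map from a ball exchangeable random urn configuration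
`Ψ ∈ [n]^{[2m]}` (with probability mass function `p`), then for every `B ∈ A_n^m`:
`P(X = B) = P(deg X = deg B) · (∏_i d(B,i)!)/(2m)! · m!·2^{m'(B)} /
((∏_{i<j} B(i,j)!)·(∏_i (B(i,i)/2)!))`. -/
theorem edge_stationary_formula (n m : ℕ)
    (p : (Fin (2 * m) → Fin n) → ℝ)
    (hp : ∀ ψ, 0 ≤ p ψ) (hsum : ∑ ψ, p ψ = 1)
    (hexch : ∀ (τ : Equiv.Perm (Fin (2 * m))) (ψ : Fin (2 * m) → Fin n),
      p (ψ ∘ τ) = p ψ)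
    (B : Fin n → Fin n → ℕ)
    (hsym : ∀ i j, B i j = B j i) (heven : ∀ i, 2 ∣ B i i)
    (hm : ∑ i, ∑ j, B i j = 2 * m) :
    (∑ ψ ∈ Finset.univ.filter
        (fun ψ : Fin (2 * m) → Fin n => ∀ i j, stubAdj ψ i j = B i j), p ψ) =
      (∑ ψ ∈ Finset.univ.filter
          (fun ψ : Fin (2 * m) → Fin n => ∀ i, colorCount ψ i = degB B i), p ψ)
        * (∏ i : Fin n, ((degB B i)! : ℝ)) / ((2 * m)! : ℝ)
        * (m ! : ℝ) * 2 ^ nonloop B /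
        ((∏ i : Fin n, ∏ j : Fin n, if i < j then ((B i j)! : ℝ) else 1) *
          ∏ i : Fin n, ((B i i / 2)! : ℝ)) := by

  classical
  -- helper: cardinalities of filters with equivalent predicates agree
  have filter_card_ext : ∀ {α : Type} [Fintype α] {p q : α → Prop}
      (ip : DecidablePred p) (iq : DecidablePred q), (∀ x, p x ↔ q x) →
      (@Finset.filter _ p ip univ).card = (@Finset.filter _ q iq univ).card := by
    intro α _ p q ip iq h
    have : univ.filter p = univ.filter q := by
      ext x
      simp only [Finset.mem_filter, Finset.mem_univ, true_and]
      exact h x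
    rw [this]
  set S1 := univ.filter (fun ψ : Fin (2 * m) → Fin n => ∀ i j, stubAdj ψ i j = B i j) with hS1
  set S2 := univ.filter (fun ψ : Fin (2 * m) → Fin n => ∀ i, colorCount ψ i = degB B i) with hS2
  set FR : ℝ := ∏ i : Fin n, ((degB B i)! : ℝ) with hFR
  -- Step A : exchangeability identity
  have key : ∀ ψ ∈ S1, ((2 * m)! : ℝ) * p ψ = FR * ∑ ψ' ∈ S2, p ψ' := by
    intro ψ hψ
    have hmem : ∀ i j, stubAdj ψ i j = B i j := (Finset.mem_filter.mp hψ).2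
    have hcc : ∀ i, colorCount ψ i = degB B i := colorCount_of_stub hmem
    have t1 : ∑ τ : Equiv.Perm (Fin (2 * m)), p (ψ ∘ τ) = ((2 * m)! : ℝ) * p ψ := by
      rw [Finset.sum_congr rfl fun τ _ => hexch τ ψ, Finset.sum_const, Finset.card_univ,
        Fintype.card_perm, Fintype.card_fin, nsmul_eq_mul]
    have t3count : ∀ ψ' : Fin (2 * m) → Fin n,
        ((univ.filter fun τ : Equiv.Perm (Fin (2 * m)) => ψ ∘ τ = ψ').card : ℕ)
          = if (∀ i, colorCount ψ' i = degB B i) then ∏ i, (degB B i)! else 0 := by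
      intro ψ'
      by_cases hc : ∀ i, colorCount ψ' i = degB B i
      · rw [if_pos hc]
        have e1 : (univ.filter fun τ : Equiv.Perm (Fin (2 * m)) => ψ ∘ τ = ψ').card
            = (univ.filter fun τ : Equiv.Perm (Fin (2 * m)) => ∀ x, ψ (τ x) = ψ' x).card := by
          exact filter_card_ext _ _ (fun τ => by
            constructor
            · intro h x; exact congrFun h x
            · intro h; funext x; exact h x)
        rw [e1]
        have e2 := card_perm_comp ψ ψ' (fun b => by
          show colorCount ψ' b = colorCount ψ b
          rw [hcc b, hc b])
        rw [show (univ.filter fun τ : Equiv.Perm (Fin (2 * m)) => ∀ x, ψ (τ x) = ψ' x).card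
            = ∏ b : Fin n, ((univ.filter fun x => ψ x = b).card)! from
          (filter_card_ext _ _ (fun τ => Iff.rfl)).trans e2]
        exact Finset.prod_congr rfl fun b _ => by
          show (colorCount ψ b)! = (degB B b)!
          rw [hcc b]
      · rw [if_neg hc, Finset.card_eq_zero, Finset.filter_eq_empty_iff]
        intro τ _
        intro hτ
        exact hc (fun i => by
          rw [show ψ' = ψ ∘ τ from hτ.symm, colorCount_comp, hcc])
    have t2 : ∑ τ : Equiv.Perm (Fin (2 * m)), p (ψ ∘ τ)
        = ∑ ψ' : Fin (2 * m) → Fin n,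
            (((univ.filter fun τ : Equiv.Perm (Fin (2 * m)) => ψ ∘ τ = ψ').card : ℕ) : ℝ)
              * p ψ' := by
      rw [← Finset.sum_fiberwise_of_maps_to
        (g := fun τ : Equiv.Perm (Fin (2 * m)) => ψ ∘ τ) (t := univ)
        (fun τ _ => Finset.mem_univ _) (fun τ => p (ψ ∘ τ))]
      refine Finset.sum_congr rfl fun ψ' _ => ?_
      rw [Finset.sum_congr rfl (fun τ hτ => by
        rw [show ψ ∘ τ = ψ' from (Finset.mem_filter.mp hτ).2]),
        Finset.sum_const, nsmul_eq_mul]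
    have t4 : ∑ ψ' : Fin (2 * m) → Fin n,
        (((univ.filter fun τ : Equiv.Perm (Fin (2 * m)) => ψ ∘ τ = ψ').card : ℕ) : ℝ) * p ψ'
        = FR * ∑ ψ' ∈ S2, p ψ' := by
      rw [Finset.mul_sum, hS2, Finset.sum_filter]
      refine Finset.sum_congr rfl fun ψ' _ => ?_
      rw [t3count ψ']
      by_cases hc : ∀ i, colorCount ψ' i = degB B i
      · rw [if_pos hc, if_pos hc, hFR]
        push_cast
        ring
      · rw [if_neg hc, if_neg hc]
        push_cast
        ring
    rw [← t1, t2, t4]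
  have hA : ((2 * m)! : ℝ) * ∑ ψ ∈ S1, p ψ
      = (S1.card : ℝ) * (FR * ∑ ψ' ∈ S2, p ψ') := by
    rw [Finset.mul_sum, Finset.sum_congr rfl key, Finset.sum_const, nsmul_eq_mul]
  -- Step B : cardinality of S1
  have hsplit := m_split hsym heven hm
  have hprodK : ∏ q : Fin n × Fin n, (ecnt B q)!
      = (∏ i, ∏ j, if i < j then (B i j)! else 1) * ∏ i, (B i i / 2)! := by
    rw [Fintype.prod_prod_type]
    have pt : ∀ i j : Fin n, (ecnt B (i, j))!
        = (if i < j then (B i j)! else 1) * (if i = j then (B i i / 2)! else 1) := by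
      intro i j
      rcases lt_trichotomy i j with h | h | h
      · simp [ecnt, h, h.ne]
      · subst h; simp [ecnt, lt_irrefl]
      · simp [ecnt, lt_asymm h, h.ne']
    rw [Finset.prod_congr rfl fun i (_ : i ∈ univ) =>
      Finset.prod_congr rfl fun j (_ : j ∈ univ) => pt i j]
    rw [Finset.prod_congr rfl fun i (_ : i ∈ univ) =>
      Finset.prod_mul_distrib, Finset.prod_mul_distrib]
    congr 1
    refine Finset.prod_congr rfl fun i _ => ?_
    simp [Finset.prod_ite_eq]
  have hScard : S1.card = (univ.filter fun ψ : Fin (2 * m) → Fin n =>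
      ∀ i j, stubAdj ψ i j = B i j).card := rfl
  have hB : S1.card * ((∏ i, ∏ j, if i < j then (B i j)! else 1) * ∏ i, (B i i / 2)!)
      = m ! * 2 ^ nonloop B := by
    refine Nat.eq_of_mul_eq_mul_right
      (show 0 < 2 ^ (∑ i, B i i / 2) from pow_pos (by norm_num) _) ?_
    calc S1.card * ((∏ i, ∏ j, if i < j then (B i j)! else 1) * ∏ i, (B i i / 2)!)
          * 2 ^ (∑ i, B i i / 2)
        = S1.card * ((∏ q : Fin n × Fin n, (ecnt B q)!) * 2 ^ (∑ i, B i i / 2)) := by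
          rw [hprodK]; ring
      _ = m ! * 2 ^ m := by rw [hScard]; exact S1_card hsym heven hm
      _ = m ! * 2 ^ nonloop B * 2 ^ (∑ i, B i i / 2) := by
          rw [mul_assoc, ← pow_add, show nonloop B + (∑ i, B i i / 2) = m from by omega]
  -- assemble over ℝ
  have hBR : (S1.card : ℝ) * ((∏ i : Fin n, ∏ j : Fin n, if i < j then ((B i j)! : ℝ) else 1)
      * ∏ i : Fin n, ((B i i / 2)! : ℝ)) = (m ! : ℝ) * 2 ^ nonloop B := by
    have := congrArg (fun k : ℕ => (k : ℝ)) hB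
    push_cast [apply_ite (fun k : ℕ => (k : ℝ))] at this
    exact this
  have hT : ((2 * m)! : ℝ) ≠ 0 := Nat.cast_ne_zero.mpr (Nat.factorial_ne_zero _)
  have hKlt : (∏ i : Fin n, ∏ j : Fin n, if i < j then ((B i j)! : ℝ) else 1) ≠ 0 := by
    apply LT.lt.ne'
    apply Finset.prod_pos
    intro i _
    apply Finset.prod_pos
    intro j _
    split
    · exact_mod_cast Nat.factorial_pos _
    · norm_num
  have hKd : (∏ i : Fin n, ((B i i / 2)! : ℝ)) ≠ 0 := by
    apply LT.lt.ne'
    apply Finset.prod_pos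
    intro i _
    exact_mod_cast Nat.factorial_pos _
  rw [show (∑ ψ ∈ Finset.univ.filter
      (fun ψ : Fin (2 * m) → Fin n => ∀ i j, stubAdj ψ i j = B i j), p ψ) = ∑ ψ ∈ S1, p ψ from rfl,
    show (∑ ψ ∈ Finset.univ.filter
      (fun ψ : Fin (2 * m) → Fin n => ∀ i, colorCount ψ i = degB B i), p ψ) = ∑ ψ ∈ S2, p ψ from rfl]
  have hLHS : (∑ ψ ∈ S1, p ψ) = (S1.card : ℝ) * (FR * ∑ ψ' ∈ S2, p ψ') / ((2 * m)! : ℝ) := by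
    rw [← hA]
    field_simp
  rw [hLHS]
  field_simp
  linear_combination (FR * (∑ ψ' ∈ S2, p ψ')) * hBR
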